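/- Let F be a field, n a positive integer, ≺ a monomial ordering on monomials in F[X_1, ..., X_n], and I ⊆ F[X_1, ..., X_n] an ideal whose footprint Δ_≺(I) is a finite set. If P_1, ..., P_ℓ are ℓ pairwise different points of F^n that are common zeros of all polynomials in I, then ℓ ≤ |Δ_≺(I)|. -/

import Mathlib

open scoped MonomialOrder

/-- `e` is the leading monomial (exponent vector) of the nonzero polynomial `f`
with respect to the monomial order `mo`. -/
def IsLeadingMonomialOf {σ : Type*} (mo : MonomialOrder σ) {R : Type*} [CommSemiring R]
    (f : MvPolynomial σ R) (e : σ →₀ ℕ) : Prop :=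
  e ∈ f.support ∧ ∀ e' ∈ f.support, e' ≼[mo] e

/-- The footprint `Δ_≺(I)` of an ideal `I`: the set of exponent vectors which are not the
leading monomial of any nonzero polynomial in `I`. -/
def footprint {σ : Type*} (mo : MonomialOrder σ) {R : Type*} [CommSemiring R]
    (I : Ideal (MvPolynomial σ R)) : Set (σ →₀ ℕ) :=
  {e | ¬ ∃ f ∈ I, f ≠ 0 ∧ IsLeadingMonomialOf mo f e}

open MvPolynomial

/-- Every polynomial can be reduced modulo `I` to a polynomial supported in the footprint. -/
lemma footprint_reduce {F : Type*} [Field F] {σ : Type*}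
    (mo : MonomialOrder σ) (I : Ideal (MvPolynomial σ F)) (f : MvPolynomial σ F) :
    ∃ r : MvPolynomial σ F, f - r ∈ I ∧ ↑r.support ⊆ footprint mo I := by
  classical
  suffices H : ∀ v : mo.syn, ∀ f : MvPolynomial σ F,
      (∀ e ∈ f.support, e ∉ footprint mo I → mo.toSyn e ≤ v) →
      ∃ r : MvPolynomial σ F, f - r ∈ I ∧ ↑r.support ⊆ footprint mo I by
    exact H (f.support.sup mo.toSyn) f (fun e he _ => Finset.le_sup he)
  intro v
  induction v using WellFoundedLT.induction with
  | _ v ih =>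
  intro f hf
  set bad : Finset (σ →₀ ℕ) := f.support.filter (fun e => e ∉ footprint mo I) with hbad
  rcases bad.eq_empty_or_nonempty with hb | hb
  · refine ⟨f, by simp, ?_⟩
    intro e he
    by_contra hnot
    have : e ∈ bad := Finset.mem_filter.2 ⟨he, hnot⟩
    simp [hb] at this
  · obtain ⟨e, heb, hemax⟩ := Finset.exists_max_image bad mo.toSyn hb
    have hef : e ∈ f.support := (Finset.mem_filter.1 heb).1
    have henf : e ∉ footprint mo I := (Finset.mem_filter.1 heb).2
    have : ∃ g ∈ I, g ≠ 0 ∧ IsLeadingMonomialOf mo g e := by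
      by_contra h; exact henf h
    obtain ⟨g, hgI, hg0, hge, hglead⟩ := this
    have hgc : g.coeff e ≠ 0 := mem_support_iff.1 hge
    set c : F := f.coeff e / g.coeff e with hc
    set f' : MvPolynomial σ F := f - C c * g with hf'
    have hdiff : f - f' ∈ I := by
      have : f - f' = C c * g := by ring
      rw [this]; exact Ideal.mul_mem_left I _ hgI
    have hce : f'.coeff e = 0 := by
      simp only [hf', coeff_sub, coeff_C_mul, hc]
      field_simp
      simp
    -- every bad monomial of f' is strictly below e
    have key : ∀ e' ∈ f'.support, e' ∉ footprint mo I → mo.toSyn e' < mo.toSyn e := by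
      intro e' he' hnf'
      have hne : e' ≠ e := by
        intro h; rw [h] at he'; exact mem_support_iff.1 he' hce
      have hlt_of_le : mo.toSyn e' ≤ mo.toSyn e → mo.toSyn e' < mo.toSyn e := by
        intro hle
        rcases lt_or_eq_of_le hle with h | h
        · exact h
        · exact absurd (mo.toSyn.injective h) hne
      have hc' : f'.coeff e' ≠ 0 := mem_support_iff.1 he'
      by_cases hfe' : e' ∈ f.support
      · exact hlt_of_le (hemax e' (Finset.mem_filter.2 ⟨hfe', hnf'⟩))
      · have hfz : f.coeff e' = 0 := notMem_support_iff.1 hfe'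
        have hge' : e' ∈ g.support := by
          rw [mem_support_iff]
          intro hz
          apply hc'
          simp [hf', coeff_sub, coeff_C_mul, hfz, hz]
        exact hlt_of_le (hglead e' hge')
    set bad' : Finset (σ →₀ ℕ) := f'.support.filter (fun e => e ∉ footprint mo I) with hbad'
    rcases bad'.eq_empty_or_nonempty with hb' | hb'
    · refine ⟨f', hdiff, ?_⟩
      intro e' he'
      by_contra hnot
      have : e' ∈ bad' := Finset.mem_filter.2 ⟨he', hnot⟩
      simp [hb'] at this
    · obtain ⟨e₂, he₂b, he₂max⟩ := Finset.exists_max_image bad' mo.toSyn hb'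
      have he₂lt : mo.toSyn e₂ < v :=
        lt_of_lt_of_le (key e₂ (Finset.mem_filter.1 he₂b).1 (Finset.mem_filter.1 he₂b).2)
          (hf e hef henf)
      obtain ⟨r, hr1, hr2⟩ := ih (mo.toSyn e₂) he₂lt f'
        (fun e' he' hnf' => he₂max e' (Finset.mem_filter.2 ⟨he', hnf'⟩))
      refine ⟨r, ?_, hr2⟩
      have : f - r = (f - f') + (f' - r) := by ring
      rw [this]
      exact Ideal.add_mem I hdiff hr1

/-- Interpolation: there is a polynomial with arbitrary prescribed values at
finitely many pairwise distinct points. -/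
lemma exists_eval_eq {F : Type*} [Field F] {n : ℕ} {ℓ : ℕ}
    (p : Fin ℓ → (Fin n → F)) (hinj : Function.Injective p) (v : Fin ℓ → F) :
    ∃ f : MvPolynomial (Fin n) F, ∀ i, MvPolynomial.eval (p i) f = v i := by
  classical
  -- indicator polynomials
  have hind : ∀ j : Fin ℓ, ∃ f : MvPolynomial (Fin n) F,
      MvPolynomial.eval (p j) f = 1 ∧ ∀ i, i ≠ j → MvPolynomial.eval (p i) f = 0 := by
    intro j
    have hpair : ∀ i : Fin ℓ, i ≠ j → ∃ g : MvPolynomial (Fin n) F,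
        MvPolynomial.eval (p j) g = 1 ∧ MvPolynomial.eval (p i) g = 0 := by
      intro i hij
      have hne : p i ≠ p j := fun h => hij (hinj h)
      have : ∃ k, p i k ≠ p j k := by
        by_contra h
        push_neg at h
        exact hne (funext h)
      obtain ⟨k, hk⟩ := this
      refine ⟨C (p j k - p i k)⁻¹ * (X k - C (p i k)), ?_, ?_⟩
      · simp only [map_mul, map_sub, eval_C, eval_X]
        rw [inv_mul_cancel₀ (sub_ne_zero.2 fun h => hk h.symm)]
      · simp
    choose g hg1 hg2 using fun i : Fin ℓ => fun h : i ≠ j => hpair i h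
    refine ⟨∏ i ∈ Finset.univ.erase j, if h : i ≠ j then g i h else 1, ?_, ?_⟩
    · rw [map_prod]
      apply Finset.prod_eq_one
      intro i hi
      have hij : i ≠ j := Finset.ne_of_mem_erase hi
      rw [dif_pos hij]
      exact hg1 i hij
    · intro i hij
      rw [map_prod]
      apply Finset.prod_eq_zero (Finset.mem_erase.2 ⟨hij, Finset.mem_univ i⟩)
      rw [dif_pos hij]
      exact hg2 i hij
  choose φ hφ1 hφ2 using hind
  refine ⟨∑ j, C (v j) * φ j, ?_⟩
  intro i
  rw [map_sum]
  rw [Finset.sum_eq_single i]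
  · simp [hφ1 i]
  · intro j _ hji
    simp [hφ2 j i hji.symm]
  · intro h
    exact absurd (Finset.mem_univ i) h

/-- **The footprint bound.** Let `F` be a field, `≺` a monomial ordering on the monomials of
`F[X_1,…,X_n]`, and `I` an ideal whose footprint `Δ_≺(I)` is finite. If `P_1,…,P_ℓ` are `ℓ`
pairwise different common zeros of `I` in `F^n`, then `ℓ ≤ |Δ_≺(I)|`. -/
theorem footprint_bound
    {F : Type*} [Field F] {n : ℕ} (hn : 0 < n)
    (mo : MonomialOrder (Fin n)) (I : Ideal (MvPolynomial (Fin n) F))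
    (hfin : (footprint mo I).Finite)
    (ℓ : ℕ) (p : Fin ℓ → (Fin n → F)) (hinj : Function.Injective p)
    (hzero : ∀ j, ∀ f ∈ I, MvPolynomial.eval (p j) f = 0) :
    ℓ ≤ (footprint mo I).ncard := by
  classical
  set S : Set (MvPolynomial (Fin n) F) :=
    (fun e => monomial e (1 : F)) '' (footprint mo I) with hS
  have hSfin : S.Finite := hfin.image _
  set W : Submodule F (MvPolynomial (Fin n) F) := Submodule.span F S with hW
  haveI : FiniteDimensional F W := FiniteDimensional.span_of_finite F hSfin
  -- the evaluation linear map
  set E : MvPolynomial (Fin n) F →ₗ[F] (Fin ℓ → F) :=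
    LinearMap.pi (fun j => (MvPolynomial.aeval (p j)).toLinearMap) with hE
  have hEapp : ∀ f j, E f j = MvPolynomial.eval (p j) f := by
    intro f j
    simp only [hE, LinearMap.pi_apply, AlgHom.toLinearMap_apply]
    rw [MvPolynomial.aeval_def, MvPolynomial.eval, Algebra.algebraMap_self]
    rfl
  -- restriction of E to W is surjective
  have hsurj : Function.Surjective (E.domRestrict W) := by
    intro v
    obtain ⟨f, hfv⟩ := exists_eval_eq p hinj v
    obtain ⟨r, hrI, hrsupp⟩ := footprint_reduce mo I f
    have hrW : r ∈ W := by
      rw [r.as_sum]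
      apply Submodule.sum_mem
      intro e he
      have : monomial e (r.coeff e) = (r.coeff e) • monomial e (1 : F) := by
        rw [MvPolynomial.smul_monomial, smul_eq_mul, mul_one]
      rw [this]
      exact Submodule.smul_mem _ _ (Submodule.subset_span ⟨e, hrsupp he, rfl⟩)
    refine ⟨⟨r, hrW⟩, ?_⟩
    funext j
    rw [LinearMap.domRestrict_apply, hEapp]
    have h0 : MvPolynomial.eval (p j) (f - r) = 0 := hzero j _ hrI
    rw [map_sub] at h0
    show MvPolynomial.eval (p j) r = v j
    rw [← sub_eq_zero.1 h0]
    exact hfv j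
  -- dimension count
  have h1 : ℓ = Module.finrank F (Fin ℓ → F) := by
    simp [Module.finrank_pi]
  have h2 : Module.finrank F (Fin ℓ → F) ≤ Module.finrank F W := by
    have hrange : LinearMap.range (E.domRestrict W) = ⊤ :=
      LinearMap.range_eq_top.2 hsurj
    calc Module.finrank F (Fin ℓ → F)
        = Module.finrank F (LinearMap.range (E.domRestrict W)) := by
          rw [hrange]; exact (finrank_top F _).symm
      _ ≤ Module.finrank F W := (E.domRestrict W).finrank_range_le
  have h3 : Module.finrank F W ≤ S.ncard := by
    haveI := hSfin.fintype
    calc Module.finrank F W ≤ S.toFinset.card := finrank_span_le_card S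
      _ = S.ncard := (Set.ncard_eq_toFinset_card' S).symm
  have h4 : S.ncard ≤ (footprint mo I).ncard := Set.ncard_image_le hfin
  omega
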